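/- arXiv:1410.1627 — 4 statements merged into one kernel-verified Lean document; each statement's English description precedes it below -/
import Mathlib

section
/- A binary linear code C of dimension k with value assignment m(·) is subcode-complete if and only if m(p) > 0 for all points p of PG(k−1, 2). Equivalently: a k-dimensional binary code C generated by a k×n matrix G whose columns are nonzero vectors of GF(2)^k satisfies that every subcode D of C equals the shortened subcode C_{supp(D)} if and only if every nonzero vector of GF(2)^k appears among the columns of G. -/
/-- The fundamental cone of a binary matrix `H` (entries in `GF(2)`),
    viewed via its support: `x ∈ K(H)` iff all coordinates are nonnegative and
    for every row `j` and every `ℓ` in the support of row `j`,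
    `x ℓ ≤ ∑_{i ∈ supp(row j), i ≠ ℓ} x i`. -/
def fundCone {ι κ : Type*} [Fintype ι] [Fintype κ] [DecidableEq κ]
    (H : Matrix ι κ (ZMod 2)) : Set (κ → ℝ) :=
  {x | (∀ i, 0 ≤ x i) ∧
    ∀ j, ∀ ℓ, H j ℓ = 1 →
      x ℓ ≤ ∑ i ∈ Finset.univ.filter (fun i => H j i = 1 ∧ i ≠ ℓ), x i}

/-- Max-fractional weight: (sum of coordinates)/(max coordinate). -/
noncomputable def wMaxfrac {κ : Type*} [Fintype κ] (x : κ → ℝ) : ℝ :=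
  (∑ i, x i) / (⨆ i, x i)

/-- AWGNC pseudoweight. -/
noncomputable def wAWGNC {κ : Type*} [Fintype κ] (x : κ → ℝ) : ℝ :=
  (∑ i, x i) ^ 2 / (∑ i, (x i) ^ 2)

/-- BEC pseudoweight: size of the support. -/
noncomputable def wBEC {κ : Type*} (x : κ → ℝ) : ℕ :=
  Set.ncard {i | x i ≠ 0}

/-- Hamming weight of a vector over GF(2). -/
def hammingWt {κ : Type*} [Fintype κ] (c : κ → ZMod 2) : ℕ :=
  (Finset.univ.filter (fun i => c i ≠ 0)).card


lemma dual_eq_dotProduct {k : ℕ} (ψ : (Fin k → ZMod 2) →ₗ[ZMod 2] ZMod 2)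
    (u : Fin k → ZMod 2) :
    ψ u = dotProduct u (fun j => ψ (Pi.single j 1)) := by
  rw [LinearMap.pi_apply_eq_sum_univ ψ u, dotProduct]
  refine Finset.sum_congr rfl fun j _ => ?_
  rw [smul_eq_mul]
  congr 2
  funext j'
  simp [Pi.single_apply, eq_comm]

lemma vecMul_inj {k n : ℕ} (G : Matrix (Fin k) (Fin n) (ZMod 2)) (hrank : G.rank = k) :
    Function.Injective (fun u : Fin k → ZMod 2 => Matrix.vecMul u G) := by
  have hli : LinearIndependent (ZMod 2) (fun i => G i) := by
    rw [linearIndependent_iff_card_eq_finrank_span, Fintype.card_fin]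
    have h2 := Matrix.rank_eq_finrank_span_row G
    rw [hrank] at h2
    exact h2
  exact Matrix.vecMul_injective_iff.mpr hli

lemma zmod2_ne_zero {x : ZMod 2} (h : x ≠ 0) : x = 1 := by
  revert h; revert x; decide

lemma zmod2_cases : ∀ x : ZMod 2, x = 0 ∨ x = 1 := by decide

/-- A k-dimensional binary code generated by G (with nonzero columns) is
    subcode-complete iff every nonzero vector of GF(2)^k appears among the
    columns of G. -/
theorem subcodeComplete_iff_all_points {k n : ℕ}
    (G : Matrix (Fin k) (Fin n) (ZMod 2)) (hrank : G.rank = k)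
    (hcols : ∀ i : Fin n, (fun j => G j i) ≠ 0) :
    (∀ D : Submodule (ZMod 2) (Fin n → ZMod 2),
        (D : Set (Fin n → ZMod 2)) ⊆ Set.range (fun u => Matrix.vecMul u G) →
        (D : Set (Fin n → ZMod 2)) =
          {c | c ∈ Set.range (fun u => Matrix.vecMul u G) ∧
               ∀ i, c i ≠ 0 → ∃ c' ∈ (D : Set (Fin n → ZMod 2)), c' i ≠ 0}) ↔
    (∀ p : Fin k → ZMod 2, p ≠ 0 → ∃ i : Fin n, (fun j => G j i) = p) := by
  classical
  have hinj := vecMul_inj G hrank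
  have hvm : ∀ (v : Fin k → ZMod 2) (i : Fin n),
      Matrix.vecMul v G i = dotProduct v (fun j => G j i) := fun v i => rfl
  constructor
  · -- subcode-complete → all points appear
    intro hcomp p hp
    by_contra hno
    push_neg at hno
    obtain ⟨j0, hj0⟩ : ∃ j, p j ≠ 0 := by
      by_contra h; push_neg at h; exact hp (funext h)
    have hpj0 : p j0 = 1 := zmod2_ne_zero hj0
    let φ : (Fin k → ZMod 2) →ₗ[ZMod 2] ZMod 2 :=
      { toFun := fun u => dotProduct u p
        map_add' := fun a b => add_dotProduct a b p
        map_smul' := fun r a => smul_dotProduct r a p }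
    set D := (LinearMap.ker φ).map (Matrix.vecMulLinear G) with hDdef
    have hD : (D : Set (Fin n → ZMod 2)) ⊆ Set.range (fun u => Matrix.vecMul u G) := by
      rintro c hc
      obtain ⟨v, -, rfl⟩ := Submodule.mem_map.mp hc
      exact ⟨v, rfl⟩
    have key := hcomp D hD
    set u0 : Fin k → ZMod 2 := Pi.single j0 1 with hu0def
    have hu0p : dotProduct u0 p = 1 := by
      rw [hu0def, single_dotProduct, one_mul, hpj0]
    have hc0 : Matrix.vecMul u0 G ∈ (D : Set (Fin n → ZMod 2)) := by
      rw [key]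
      refine ⟨⟨u0, rfl⟩, ?_⟩
      intro i _
      by_contra hni
      push_neg at hni
      have hzero : ∀ v : Fin k → ZMod 2, dotProduct v p = 0 →
          dotProduct v (fun j => G j i) = 0 := by
        intro v hv
        have hm : Matrix.vecMul v G ∈ (D : Set (Fin n → ZMod 2)) :=
          Submodule.mem_map.mpr ⟨v, hv, rfl⟩
        have := hni _ hm
        rwa [hvm] at this
      have hstep : ∀ j, G j i + p j * G j0 i = 0 := by
        intro j
        have hv : dotProduct (Pi.single j 1 + p j • (Pi.single j0 1 : Fin k → ZMod 2)) p = 0 := by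
          rw [add_dotProduct, smul_dotProduct, single_dotProduct,
            single_dotProduct, one_mul, one_mul, hpj0, smul_eq_mul, mul_one,
            CharTwo.add_self_eq_zero]
        have := hzero _ hv
        rwa [add_dotProduct, smul_dotProduct, single_dotProduct,
          single_dotProduct, one_mul, one_mul, smul_eq_mul] at this
      rcases zmod2_cases (G j0 i) with h0 | h1
      · refine hcols i (funext fun j => ?_)
        have := hstep j
        rwa [h0, mul_zero, add_zero] at this
      · refine hno i (funext fun j => ?_)
        have := hstep j
        rw [h1, mul_one] at this
        -- G j i + p j = 0 → G j i = p j in char 2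
        have := congrArg (fun x => x + p j) this
        simpa [add_assoc, CharTwo.add_self_eq_zero] using this
    obtain ⟨v, hvker, hveq⟩ := Submodule.mem_map.mp hc0
    have hv0 : v = u0 := hinj hveq
    rw [hv0] at hvker
    have : dotProduct u0 p = 0 := hvker
    rw [hu0p] at this
    exact one_ne_zero this
  · -- all points → subcode-complete
    intro hall D hD
    ext c
    simp only [Set.mem_setOf_eq]
    constructor
    · intro hc
      exact ⟨hD hc, fun i hi => ⟨c, hc, hi⟩⟩
    · rintro ⟨⟨u, rfl⟩, hsupp⟩
      by_contra hcD
      set U := D.comap (Matrix.vecMulLinear G) with hUdef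
      have hu : u ∉ U := fun h => hcD (Submodule.mem_comap.mp h)
      have hq : (Submodule.Quotient.mk u : (Fin k → ZMod 2) ⧸ U) ≠ 0 := by
        simpa [Submodule.Quotient.mk_eq_zero] using hu
      obtain ⟨φ, hφ⟩ : ∃ φ : Module.Dual (ZMod 2) ((Fin k → ZMod 2) ⧸ U),
          φ (Submodule.Quotient.mk u) ≠ 0 := by
        by_contra h
        push_neg at h
        exact hq ((Module.forall_dual_apply_eq_zero_iff (ZMod 2) _).mp h)
      set ψ := φ.comp U.mkQ with hψdef
      set p : Fin k → ZMod 2 := fun j => ψ (Pi.single j 1) with hpdef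
      have hψ : ∀ v, ψ v = dotProduct v p := fun v => dual_eq_dotProduct ψ v
      have hψu : ψ u ≠ 0 := hφ
      have hpne : p ≠ 0 := by
        intro h0
        apply hψu
        rw [hψ, h0]
        simp [dotProduct]
      obtain ⟨i, hcol⟩ := hall p hpne
      have hci : Matrix.vecMul u G i ≠ 0 := by
        rw [hvm, hcol, ← hψ]
        exact hψu
      obtain ⟨c', hc'D, hc'i⟩ := hsupp i hci
      obtain ⟨v, rfl⟩ := hD hc'D
      have hvU : v ∈ U := Submodule.mem_comap.mpr hc'D
      have hψv : ψ v = 0 := by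
        rw [hψdef]
        simp [LinearMap.comp_apply, Submodule.mkQ_apply,
          (Submodule.Quotient.mk_eq_zero U).mpr hvU]
      exact hc'i (show Matrix.vecMul v G i = 0 by rw [hvm, hcol, ← hψ, hψv])
end

section
/- Any binary linear constant-weight code of dimension k has a generator matrix in which every nonzero vector of GF(2)^k appears the same number of times as a column; consequently, if the code has length n and minimum distance d, then n = (2^k − 1)·m and d = 2^{k−1}·m for some positive integer m. -/
open Finset

namespace CWAux

def ip {k : ℕ} (u p : Fin k → ZMod 2) : ZMod 2 := ∑ j, u j * p j

def sgn {k : ℕ} (u p : Fin k → ZMod 2) : ℤ := if ip u p = 0 then 1 else -1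

lemma zmod2_cases (a : ZMod 2) : a = 0 ∨ a = 1 := by revert a; decide

lemma ip_zero_left {k : ℕ} (p : Fin k → ZMod 2) : ip 0 p = 0 := by
  simp [ip]

lemma ip_zero_right {k : ℕ} (u : Fin k → ZMod 2) : ip u 0 = 0 := by
  simp [ip]

lemma ip_add_right {k : ℕ} (u p q : Fin k → ZMod 2) :
    ip u (p + q) = ip u p + ip u q := by
  simp [ip, mul_add, Finset.sum_add_distrib]

lemma ip_add_left {k : ℕ} (u v p : Fin k → ZMod 2) :
    ip (u + v) p = ip u p + ip v p := by
  simp [ip, add_mul, Finset.sum_add_distrib]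

lemma ip_single {k : ℕ} (j₀ : Fin k) (p : Fin k → ZMod 2) :
    ip (Pi.single j₀ 1) p = p j₀ := by
  simp [ip, Pi.single_apply, Finset.sum_ite_eq']

lemma sgn_mul {k : ℕ} (u p q : Fin k → ZMod 2) :
    sgn u p * sgn u q = sgn u (p + q) := by
  unfold sgn
  rw [ip_add_right]
  rcases zmod2_cases (ip u p) with h1 | h1 <;> rcases zmod2_cases (ip u q) with h2 | h2 <;>
    simp [h1, h2] <;> decide

lemma sum_sgn {k : ℕ} (p : Fin k → ZMod 2) :
    ∑ u, sgn u p = if p = 0 then (2 ^ k : ℤ) else 0 := by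
  split_ifs with hp
  · subst hp
    simp [sgn, ip_zero_right, Fintype.card_fun]
  · obtain ⟨j₀, hj₀⟩ : ∃ j₀, p j₀ ≠ 0 := by
      by_contra h
      push_neg at h
      exact hp (funext h)
    have hpj : p j₀ = 1 := by
      rcases zmod2_cases (p j₀) with h | h
      · exact absurd h hj₀
      · exact h
    refine Finset.sum_involution (fun u _ => u + Pi.single j₀ 1) ?_ ?_ ?_ ?_
    · intro u _
      have : ip (u + Pi.single j₀ 1) p = ip u p + 1 := by
        rw [ip_add_left, ip_single, hpj]
      unfold sgn
      rw [this]
      rcases zmod2_cases (ip u p) with h | h <;> simp [h] <;> decide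
    · intro u _ _
      intro hcon
      have h0 := congrFun hcon j₀
      simp at h0
    · intro u _; exact Finset.mem_univ _
    · intro u _
      funext j
      simp [add_assoc, CharTwo.add_self_eq_zero]

end CWAux

open CWAux

/-- A binary linear constant-weight code of dimension k (with no zero coordinate)
    has a generator matrix in which every nonzero vector of GF(2)^k appears the same
    number m of times as a column; consequently n = (2^k - 1) m and the constant
    weight is 2^(k-1) m. -/
theorem constant_weight_code_structure {n k w : ℕ} (hk : 0 < k)
    (C : Submodule (ZMod 2) (Fin n → ZMod 2))
    (hdim : Module.finrank (ZMod 2) C = k)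
    (hw : ∀ c ∈ C, c ≠ 0 → hammingWt c = w)
    (hfull : ∀ i : Fin n, ∃ c ∈ C, c i ≠ 0) :
    ∃ m : ℕ, 0 < m ∧
      (∃ G : Matrix (Fin k) (Fin n) (ZMod 2),
        Set.range (fun u => Matrix.vecMul u G) = (C : Set (Fin n → ZMod 2)) ∧
        ∀ p : Fin k → ZMod 2, p ≠ 0 →
          (Finset.univ.filter (fun i : Fin n => (fun j => G j i) = p)).card = m) ∧
      n = (2 ^ k - 1) * m ∧ w = 2 ^ (k - 1) * m := by
  classical
  have hfd : Module.Finite (ZMod 2) C := inferInstance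
  let b := Module.finBasisOfFinrankEq (ZMod 2) C hdim
  set G : Matrix (Fin k) (Fin n) (ZMod 2) := fun j i => (b j : Fin n → ZMod 2) i with hGdef
  set col : Fin n → (Fin k → ZMod 2) := fun i j => G j i with hcoldef
  set f : (Fin k → ZMod 2) → ℕ :=
    fun p => (Finset.univ.filter (fun i : Fin n => col i = p)).card with hfdef
  -- vecMul is coordinate of sum of basis elements
  have hvec : ∀ u : Fin k → ZMod 2,
      Matrix.vecMul u G = (((∑ j, u j • b j : C)) : Fin n → ZMod 2) := by
    intro u; funext i
    simp [Matrix.vecMul, dotProduct, hGdef, Submodule.coe_sum]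
  have hrange : Set.range (fun u => Matrix.vecMul u G) = (C : Set (Fin n → ZMod 2)) := by
    ext c; constructor
    · rintro ⟨u, rfl⟩
      show Matrix.vecMul u G ∈ (C : Set (Fin n → ZMod 2))
      rw [hvec]
      exact (∑ j, u j • b j : C).2
    · intro hc
      refine ⟨fun j => b.repr ⟨c, hc⟩ j, ?_⟩
      show Matrix.vecMul (fun j => b.repr ⟨c, hc⟩ j) G = c
      rw [hvec]
      rw [b.sum_repr ⟨c, hc⟩]
  have hmem : ∀ u, Matrix.vecMul u G ∈ C := by
    intro u
    rw [← SetLike.mem_coe, ← hrange]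
    exact ⟨u, rfl⟩
  have hne : ∀ u : Fin k → ZMod 2, u ≠ 0 → Matrix.vecMul u G ≠ 0 := by
    intro u hu hcon
    apply hu
    have h0 : (∑ j, u j • b j : C) = 0 := by
      apply Subtype.coe_injective
      show ((∑ j, u j • b j : C) : Fin n → ZMod 2) = ((0 : C) : Fin n → ZMod 2)
      rw [← hvec, hcon]; rfl
    have := Fintype.linearIndependent_iff.mp b.linearIndependent u h0
    funext j; exact this j
  have hci : ∀ (u : Fin k → ZMod 2) (i : Fin n),
      Matrix.vecMul u G i = ip u (col i) := by
    intro u i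
    simp [Matrix.vecMul, dotProduct, ip, hcoldef]
  -- fiberwise summation
  have hfiber : ∀ F : (Fin k → ZMod 2) → ℤ,
      ∑ i, F (col i) = ∑ p, (f p : ℤ) * F p := by
    intro F
    rw [← Finset.sum_fiberwise Finset.univ col (fun i => F (col i))]
    refine Finset.sum_congr rfl fun p _ => ?_
    rw [Finset.sum_congr rfl (fun i hi => by
      rw [(Finset.mem_filter.mp hi).2] :
      ∀ i ∈ Finset.univ.filter (fun i => col i = p), F (col i) = F p)]
    rw [Finset.sum_const, nsmul_eq_mul]
  -- step B
  have hB : ∀ u : Fin k → ZMod 2, u ≠ 0 →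
      ∑ i, sgn u (col i) = (n : ℤ) - 2 * w := by
    intro u hu
    have hcw : hammingWt (Matrix.vecMul u G) = w := hw _ (hmem u) (hne u hu)
    have h1 : ∑ i, sgn u (col i)
        = ∑ i, (if Matrix.vecMul u G i = 0 then (1:ℤ) else -1) := by
      refine Finset.sum_congr rfl fun i _ => ?_
      rw [sgn, hci u i]
    rw [h1, Finset.sum_ite, Finset.sum_const, Finset.sum_const]
    have hcc : (Finset.univ.filter (fun i => Matrix.vecMul u G i = 0)).card +
        (Finset.univ.filter (fun i => ¬ Matrix.vecMul u G i = 0)).card = n := by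
      rw [Finset.card_filter_add_card_filter_not]
      simp
    have hwc : (Finset.univ.filter (fun i => ¬ Matrix.vecMul u G i = 0)).card = w := hcw
    rw [hwc] at hcc ⊢
    have : (Finset.univ.filter (fun i => Matrix.vecMul u G i = 0)).card = n - w := by omega
    rw [this]
    have hwn : w ≤ n := by omega
    simp only [nsmul_eq_mul, mul_one, mul_neg_one]
    rw [Nat.cast_sub hwn]
    ring
  -- step C : Fourier inversion
  have hC : ∀ p : Fin k → ZMod 2, p ≠ 0 → (2 ^ k : ℤ) * f p = 2 * w := by
    intro p hp
    have key1 : ∑ u, sgn u p * (∑ i, sgn u (col i)) = 2 * w := by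
      rw [← Finset.sum_erase_add Finset.univ _ (Finset.mem_univ (0 : Fin k → ZMod 2))]
      have h0 : sgn (0 : Fin k → ZMod 2) p * (∑ i, sgn 0 (col i)) = (n : ℤ) := by
        simp [sgn, ip_zero_left]
      have h2 : ∑ u ∈ Finset.univ.erase (0 : Fin k → ZMod 2),
          sgn u p * (∑ i, sgn u (col i))
          = ∑ u ∈ Finset.univ.erase (0 : Fin k → ZMod 2), sgn u p * ((n : ℤ) - 2 * w) := by
        refine Finset.sum_congr rfl fun u hu => ?_
        rw [hB u (Finset.ne_of_mem_erase hu)]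
      have h3 : ∑ u ∈ Finset.univ.erase (0 : Fin k → ZMod 2), sgn u p = -1 := by
        have h4 : ∑ u ∈ Finset.univ.erase (0 : Fin k → ZMod 2), sgn u p
            + sgn (0 : Fin k → ZMod 2) p = ∑ u, sgn u p :=
          Finset.sum_erase_add _ _ (Finset.mem_univ _)
        rw [sum_sgn, if_neg hp] at h4
        have h5 : sgn (0 : Fin k → ZMod 2) p = 1 := by simp [sgn, ip_zero_left]
        rw [h5] at h4
        linarith
      rw [h0, h2, ← Finset.sum_mul, h3]
      ring
    have key2 : ∑ u, sgn u p * (∑ i, sgn u (col i)) = (2 ^ k : ℤ) * f p := by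
      have e1 : ∑ u, sgn u p * (∑ i, sgn u (col i))
          = ∑ i, ∑ u, sgn u p * sgn u (col i) := by
        rw [Finset.sum_comm]
        exact Finset.sum_congr rfl fun u _ => Finset.mul_sum _ _ _
      rw [e1]
      have e2 : ∀ i, ∑ u, sgn u p * sgn u (col i)
          = (if col i = p then (2 ^ k : ℤ) else 0) := by
        intro i
        have : ∀ u, sgn u p * sgn u (col i) = sgn u (p + col i) := fun u => sgn_mul u p (col i)
        rw [Finset.sum_congr rfl fun u _ => this u, sum_sgn]
        congr 1
        simp only [eq_iff_iff]
        constructor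
        · intro h
          funext j
          have hj := congrFun h j
          have h2 : col i j = -(p j) := eq_neg_of_add_eq_zero_right hj
          rwa [CharTwo.neg_eq] at h2
        · intro h
          rw [h]
          funext j
          exact CharTwo.add_self_eq_zero _
      rw [Finset.sum_congr rfl fun i _ => e2 i]
      rw [← Finset.sum_filter, Finset.sum_const, nsmul_eq_mul]
      ring
    rw [← key2, key1]
  -- f 0 = 0
  have f0 : f 0 = 0 := by
    rw [hfdef]
    rw [Finset.card_eq_zero, Finset.filter_eq_empty_iff]
    intro i _
    intro hcol
    obtain ⟨c, hcC, hci0⟩ := hfull i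
    have : c ∈ Set.range (fun u => Matrix.vecMul u G) := by rw [hrange]; exact hcC
    obtain ⟨u, rfl⟩ := this
    apply hci0
    show Matrix.vecMul u G i = 0
    rw [hci u i, hcol, ip_zero_right]
  -- total count
  have htot : (n : ℕ) = ∑ p, f p := by
    have := Finset.card_eq_sum_card_fiberwise
      (f := col) (s := Finset.univ) (t := Finset.univ) (fun x _ => Finset.mem_univ _)
    simpa using this
  -- the distinguished nonzero vector
  set p₀ : Fin k → ZMod 2 := fun _ => 1 with hp₀def
  have hp₀ : p₀ ≠ 0 := by
    intro h
    have := congrFun h ⟨0, hk⟩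
    simp [hp₀def] at this
  set m : ℕ := f p₀ with hmdef
  -- w = 2^(k-1) * m
  have hpow : (2 : ℤ) ^ k = 2 * 2 ^ (k - 1) := by
    conv_lhs => rw [show k = (k - 1) + 1 by omega]
    ring
  have hwm : (w : ℤ) = 2 ^ (k - 1) * m := by
    have := hC p₀ hp₀
    rw [hpow] at this
    have h2 : (2 : ℤ) * (2 ^ (k - 1) * m) = 2 * w := by linarith
    linarith
  have hwmn : w = 2 ^ (k - 1) * m := by
    have : ((2 ^ (k - 1) * m : ℕ) : ℤ) = (w : ℤ) := by push_cast; linarith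
    exact_mod_cast this.symm
  -- all nonzero fibers equal m
  have hall : ∀ p : Fin k → ZMod 2, p ≠ 0 → f p = m := by
    intro p hp
    have h1 := hC p hp
    have h2 := hC p₀ hp₀
    have h3 : (2 ^ k : ℤ) * f p = (2 ^ k : ℤ) * m := by rw [h1, h2]
    have h4 : (f p : ℤ) = m := by
      have hne2 : (2 ^ k : ℤ) ≠ 0 := by positivity
      exact mul_left_cancel₀ hne2 h3
    exact_mod_cast h4
  -- w > 0 hence m > 0
  have hwpos : 0 < w := by
    have hc := hne p₀ hp₀
    have hcw : hammingWt (Matrix.vecMul p₀ G) = w := hw _ (hmem p₀) hc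
    obtain ⟨i, hi⟩ := Function.ne_iff.mp hc
    have : i ∈ Finset.univ.filter (fun i => Matrix.vecMul p₀ G i ≠ 0) := by
      simp only [Finset.mem_filter, Finset.mem_univ, true_and]
      simpa using hi
    have hpos : 0 < hammingWt (Matrix.vecMul p₀ G) :=
      Finset.card_pos.mpr ⟨i, this⟩
    omega
  have hmpos : 0 < m := by
    rcases Nat.eq_zero_or_pos m with h | h
    · rw [h, mul_zero] at hwmn; omega
    · exact h
  -- n = (2^k - 1) * m
  have hn : n = (2 ^ k - 1) * m := by
    have h1 : ∑ p ∈ Finset.univ.erase (0 : Fin k → ZMod 2), f p + f 0 = ∑ p, f p :=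
      Finset.sum_erase_add _ _ (Finset.mem_univ _)
    have h2 : ∑ p ∈ Finset.univ.erase (0 : Fin k → ZMod 2), f p
        = (2 ^ k - 1) * m := by
      rw [Finset.sum_congr rfl fun p hp => hall p (Finset.ne_of_mem_erase hp)]
      rw [Finset.sum_const, smul_eq_mul]
      congr 1
      rw [Finset.card_erase_of_mem (Finset.mem_univ _), Finset.card_univ]
      simp [Fintype.card_fun]
    rw [f0, h2, add_zero] at h1
    omega
  exact ⟨m, hmpos, ⟨G, hrange, fun p hp => hall p hp⟩, hn, hwmn⟩
end

section
/- Let C be an [n,k,d] binary code with minimum max-fractional pseudoweight d with respect to some parity-check matrix H with ρ rows. Let C' be the [n', k, d] code obtained by repeating certain coordinates of C (each coordinate i repeated θ_i ≥ 0 additional times) in such a way that the minimum distance stays d. Then C' admits a parity-check matrix H' with ρ + (n' − n) rows whose minimum max-fractional pseudoweight equals d. -/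
/-- The coordinate-duplication map: coordinate i is repeated θ i additional times. -/
def dup {n : ℕ} (θ : Fin n → ℕ) (c : Fin n → ZMod 2) :
    (Fin n ⊕ (Σ i : Fin n, Fin (θ i))) → ZMod 2 :=
  fun i => match i with
  | .inl i => c i
  | .inr ⟨i, _⟩ => c i

lemma zmod2_cases_s13 (a : ZMod 2) : a = 0 ∨ a = 1 := by revert a; decide

lemma zmod2_ne_zero_s13 (a : ZMod 2) : a ≠ 0 ↔ a = 1 := by revert a; decide

/-- The indicator vector of a codeword lies in the fundamental cone. -/
lemma indicator_mem_fundCone {ι κ : Type*} [Fintype ι] [Fintype κ] [DecidableEq κ]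
    (M : Matrix ι κ (ZMod 2)) (c : κ → ZMod 2) (hc : M.mulVec c = 0) :
    (fun k => if c k = 1 then (1:ℝ) else 0) ∈ fundCone M := by
  constructor
  · intro i; dsimp only; split <;> norm_num
  · intro j ℓ hjℓ
    dsimp only
    by_cases hcℓ : c ℓ = 1
    · -- need some other i in row support with c i = 1
      have hrow : ∑ k, M j k * c k = 0 := congrFun hc j
      have hex : ∃ i, i ≠ ℓ ∧ M j i = 1 ∧ c i = 1 := by
        by_contra hne
        push_neg at hne
        have : ∀ i ∈ (Finset.univ.erase ℓ), M j i * c i = 0 := by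
          intro i hi
          rcases zmod2_cases_s13 (M j i) with h | h
          · simp [h]
          · rcases zmod2_cases_s13 (c i) with h' | h'
            · simp [h']
            · exact absurd h' (hne i (Finset.ne_of_mem_erase hi) h)
        have hsum : ∑ k, M j k * c k = M j ℓ * c ℓ := by
          rw [← Finset.add_sum_erase _ _ (Finset.mem_univ ℓ),
            Finset.sum_eq_zero this, add_zero]
        rw [hsum, hjℓ, hcℓ] at hrow
        exact one_ne_zero hrow
      obtain ⟨i, hiℓ, hMi, hci⟩ := hex
      rw [if_pos hcℓ]
      calc (1:ℝ) = if c i = 1 then (1:ℝ) else 0 := by rw [if_pos hci]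
        _ ≤ ∑ k ∈ Finset.univ.filter (fun k => M j k = 1 ∧ k ≠ ℓ),
              (if c k = 1 then (1:ℝ) else 0) := by
            apply Finset.single_le_sum (f := fun k => if c k = 1 then (1:ℝ) else 0)
            · intro k _; split <;> norm_num
            · simp [hMi, hiℓ]
    · rw [if_neg hcℓ]
      apply Finset.sum_nonneg
      intro k _; split <;> norm_num

def Hext {ρ n : ℕ} (H : Matrix (Fin ρ) (Fin n) (ZMod 2)) (θ : Fin n → ℕ) :
    Matrix (Fin ρ ⊕ (Σ i : Fin n, Fin (θ i)))
           (Fin n ⊕ (Σ i : Fin n, Fin (θ i))) (ZMod 2)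
  | .inl j, .inl i => H j i
  | .inl _, .inr _ => 0
  | .inr s, .inl i => if i = s.1 then 1 else 0
  | .inr s, .inr s' => if s' = s then 1 else 0

lemma Hext_mulVec_inl {ρ n : ℕ} (H : Matrix (Fin ρ) (Fin n) (ZMod 2)) (θ : Fin n → ℕ)
    (c : (Fin n ⊕ (Σ i : Fin n, Fin (θ i))) → ZMod 2) (j : Fin ρ) :
    (Hext H θ).mulVec c (Sum.inl j) = ∑ i, H j i * c (Sum.inl i) := by
  simp [Matrix.mulVec, dotProduct, Fintype.sum_sum_type, Hext]

lemma Hext_mulVec_inr {ρ n : ℕ} (H : Matrix (Fin ρ) (Fin n) (ZMod 2)) (θ : Fin n → ℕ)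
    (c : (Fin n ⊕ (Σ i : Fin n, Fin (θ i))) → ZMod 2) (s : Σ i : Fin n, Fin (θ i)) :
    (Hext H θ).mulVec c (Sum.inr s) = c (Sum.inl s.1) + c (Sum.inr s) := by
  simp [Matrix.mulVec, dotProduct, Fintype.sum_sum_type, Hext, ite_mul,
    Finset.sum_ite_eq' Finset.univ]

lemma Hext_ker {ρ n : ℕ} (H : Matrix (Fin ρ) (Fin n) (ZMod 2)) (θ : Fin n → ℕ)
    (C : Set (Fin n → ZMod 2)) (hC : C = {c | H.mulVec c = 0}) :
    {c' | (Hext H θ).mulVec c' = 0} = (dup θ) '' C := by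
  ext c'
  simp only [Set.mem_setOf_eq, Set.mem_image]
  constructor
  · intro h
    refine ⟨fun i => c' (Sum.inl i), ?_, ?_⟩
    · rw [hC]
      simp only [Set.mem_setOf_eq]
      funext j
      have := congrFun h (Sum.inl j)
      rw [Hext_mulVec_inl] at this
      simpa [Matrix.mulVec, dotProduct] using this
    · funext k
      match k with
      | .inl i => rfl
      | .inr s =>
        have := congrFun h (Sum.inr s)
        rw [Hext_mulVec_inr] at this
        simp only [Pi.zero_apply] at this
        have h2 : c' (Sum.inr s) = -(c' (Sum.inl s.1)) := by linear_combination this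
        rw [dup]
        rw [h2, CharTwo.neg_eq]
  · rintro ⟨c, hc, rfl⟩
    rw [hC] at hc
    funext r
    match r with
    | .inl j =>
      rw [Hext_mulVec_inl]
      simpa [Matrix.mulVec, dotProduct, dup] using congrFun hc j
    | .inr s =>
      rw [Hext_mulVec_inr]
      show c s.1 + c s.1 = _
      rw [CharTwo.add_self_eq_zero]
      rfl

lemma Hext_cone_eq {ρ n : ℕ} (H : Matrix (Fin ρ) (Fin n) (ZMod 2)) (θ : Fin n → ℕ)
    (x : (Fin n ⊕ (Σ i : Fin n, Fin (θ i))) → ℝ) (hx : x ∈ fundCone (Hext H θ))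
    (s : Σ i : Fin n, Fin (θ i)) : x (Sum.inr s) = x (Sum.inl s.1) := by
  obtain ⟨hpos, hineq⟩ := hx
  have key : ∀ ℓ, Hext H θ (Sum.inr s) ℓ = 1 →
      (Finset.univ.filter (fun k => Hext H θ (Sum.inr s) k = 1 ∧ k ≠ ℓ)) ⊆
        {Sum.inl s.1, Sum.inr s} := by
    intro ℓ _ k hk
    simp only [Finset.mem_filter] at hk
    obtain ⟨_, hk1, _⟩ := hk
    match k with
    | .inl i =>
      simp only [Hext] at hk1
      by_cases h : i = s.1
      · simp [h]
      · simp [h] at hk1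
    | .inr s' =>
      simp only [Hext] at hk1
      by_cases h : s' = s
      · simp [h]
      · simp [h] at hk1
  have h1 : x (Sum.inl s.1) ≤ x (Sum.inr s) := by
    have hH : Hext H θ (Sum.inr s) (Sum.inl s.1) = 1 := by simp [Hext]
    have := hineq (Sum.inr s) (Sum.inl s.1) hH
    refine this.trans_eq ?_
    rw [Finset.sum_eq_single_of_mem (Sum.inr s)]
    · simp only [Finset.mem_filter, Finset.mem_univ, true_and]; simp [Hext]
    · intro k hk hne
      have := key _ hH hk
      simp only [Finset.mem_insert, Finset.mem_singleton] at this
      rcases this with h | h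
      · subst h; simp only [Finset.mem_filter] at hk; exact absurd rfl hk.2.2
      · exact absurd h hne
  have h2 : x (Sum.inr s) ≤ x (Sum.inl s.1) := by
    have hH : Hext H θ (Sum.inr s) (Sum.inr s) = 1 := by simp [Hext]
    have := hineq (Sum.inr s) (Sum.inr s) hH
    refine this.trans_eq ?_
    rw [Finset.sum_eq_single_of_mem (Sum.inl s.1)]
    · simp only [Finset.mem_filter, Finset.mem_univ, true_and]; simp [Hext]
    · intro k hk hne
      have := key _ hH hk
      simp only [Finset.mem_insert, Finset.mem_singleton] at this
      rcases this with h | h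
      · exact absurd h hne
      · subst h; simp only [Finset.mem_filter] at hk; exact absurd rfl hk.2.2
  exact le_antisymm h2 h1

lemma Hext_cone_inl {ρ n : ℕ} (H : Matrix (Fin ρ) (Fin n) (ZMod 2)) (θ : Fin n → ℕ)
    (x : (Fin n ⊕ (Σ i : Fin n, Fin (θ i))) → ℝ) (hx : x ∈ fundCone (Hext H θ)) :
    (fun i => x (Sum.inl i)) ∈ fundCone H := by
  obtain ⟨hpos, hineq⟩ := hx
  refine ⟨fun i => hpos _, ?_⟩
  intro j ℓ hjℓ
  have hH : Hext H θ (Sum.inl j) (Sum.inl ℓ) = 1 := hjℓ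
  have := hineq (Sum.inl j) (Sum.inl ℓ) hH
  refine this.trans_eq ?_
  rw [Finset.sum_filter, Finset.sum_filter, Fintype.sum_sum_type]
  simp [Hext]

/-- If C has a parity-check matrix H with ρ rows whose minimum max-fractional
    pseudoweight equals d = d(C), and C' is obtained from C by repeating each
    coordinate i an additional θ i times in such a way that the minimum distance
    stays d, then C' has a parity-check matrix with ρ + (n' - n) rows whose minimum
    max-fractional pseudoweight equals d. -/
theorem pseudoredundancy_repeat_coordinates {ρ n : ℕ} (d : ℕ)
    (H : Matrix (Fin ρ) (Fin n) (ZMod 2)) (θ : Fin n → ℕ)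
    (C : Set (Fin n → ZMod 2)) (hC : C = {c | H.mulVec c = 0})
    (hd_min : ∀ c ∈ C, c ≠ 0 → d ≤ hammingWt c)
    (hd_ex : ∃ c ∈ C, c ≠ 0 ∧ hammingWt c = d)
    (hpw_min : ∀ x ∈ fundCone H, x ≠ 0 → (d : ℝ) ≤ wMaxfrac x)
    (hpw_ex : ∃ x ∈ fundCone H, x ≠ 0 ∧ wMaxfrac x = (d : ℝ))
    (hd' : ∃ c ∈ C, c ≠ 0 ∧ hammingWt (dup θ c) = d) :
    ∃ H' : Matrix (Fin ρ ⊕ (Σ i : Fin n, Fin (θ i)))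
                  (Fin n ⊕ (Σ i : Fin n, Fin (θ i))) (ZMod 2),
      {c' | H'.mulVec c' = 0} = (dup θ) '' C ∧
      (∀ x ∈ fundCone H', x ≠ 0 → (d : ℝ) ≤ wMaxfrac x) ∧
      (∃ x ∈ fundCone H', x ≠ 0 ∧ wMaxfrac x = (d : ℝ)) := by
  refine ⟨Hext H θ, Hext_ker H θ C hC, ?_, ?_⟩
  · -- lower bound
    intro x hx hx0
    set y : Fin n → ℝ := fun i => x (Sum.inl i) with hy
    have hyC : y ∈ fundCone H := Hext_cone_inl H θ x hx
    have hdup : ∀ s, x (Sum.inr s) = y s.1 := fun s => Hext_cone_eq H θ x hx s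
    have hpos : ∀ k, 0 ≤ x k := hx.1
    have hy0 : y ≠ 0 := by
      intro hy0
      apply hx0
      funext k
      match k with
      | .inl i => exact congrFun hy0 i
      | .inr s => rw [hdup s]; exact congrFun hy0 s.1
    obtain ⟨i0, hi0⟩ := Function.ne_iff.mp hy0
    have : Nonempty (Fin n) := ⟨i0⟩
    have hbddy : BddAbove (Set.range y) := (Set.finite_range y).bddAbove
    have hbddx : BddAbove (Set.range x) := (Set.finite_range x).bddAbove
    have hM : (⨆ i, y i) > 0 := by
      have : 0 < y i0 := lt_of_le_of_ne (hpos _) (Ne.symm hi0)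
      exact this.trans_le (le_ciSup hbddy i0)
    have hsup : (⨆ k, x k) = ⨆ i, y i := by
      apply le_antisymm
      · apply ciSup_le
        intro k
        match k with
        | .inl i => exact le_ciSup hbddy i
        | .inr s => rw [hdup s]; exact le_ciSup hbddy s.1
      · exact ciSup_le fun i => le_ciSup hbddx (Sum.inl i)
    have hsum : (∑ i, y i) ≤ ∑ k, x k := by
      rw [Fintype.sum_sum_type]
      have : (0:ℝ) ≤ ∑ s : Σ i : Fin n, Fin (θ i), x (Sum.inr s) :=
        Finset.sum_nonneg fun s _ => hpos _
      linarith
    have hmin := hpw_min y hyC hy0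
    calc (d:ℝ) ≤ wMaxfrac y := hmin
      _ ≤ wMaxfrac x := by
          rw [wMaxfrac, wMaxfrac, hsup]
          exact div_le_div_of_nonneg_right hsum hM.le
  · -- existence
    obtain ⟨c, hcC, hc0, hwt⟩ := hd'
    set c' := dup θ c with hc'
    have hker : (Hext H θ).mulVec c' = 0 := by
      have : c' ∈ (dup θ) '' C := ⟨c, hcC, rfl⟩
      rw [← Hext_ker H θ C hC] at this
      exact this
    set x : (Fin n ⊕ (Σ i : Fin n, Fin (θ i))) → ℝ :=
      fun k => if c' k = 1 then (1:ℝ) else 0 with hxdef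
    obtain ⟨i0, hi0⟩ := Function.ne_iff.mp hc0
    have hci0 : c i0 = 1 := (zmod2_ne_zero_s13 _).mp hi0
    have hx1 : x (Sum.inl i0) = 1 := by simp [hxdef, hc', dup, hci0]
    have hne : Nonempty (Fin n ⊕ (Σ i : Fin n, Fin (θ i))) := ⟨Sum.inl i0⟩
    refine ⟨x, indicator_mem_fundCone _ c' hker, ?_, ?_⟩
    · intro h
      rw [h] at hx1
      simpa using hx1
    · have hbddx : BddAbove (Set.range x) := (Set.finite_range x).bddAbove
      have hsup : (⨆ k, x k) = 1 := by
        apply le_antisymm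
        · apply ciSup_le
          intro k
          rw [hxdef]
          dsimp only
          split <;> norm_num
        · rw [← hx1]; exact le_ciSup hbddx (Sum.inl i0)
      have hsum : (∑ k, x k) = (d:ℝ) := by
        rw [hxdef]
        dsimp only
        rw [Finset.sum_boole]
        rw [← hwt]
        norm_num [hammingWt]
        congr 1
        apply Finset.filter_congr
        intro k _
        exact (zmod2_ne_zero_s13 _).symm
      rw [wMaxfrac, hsup, hsum, div_one]
end

section
/- Consider the k-dimensional binary code C of length n = z_1 + ⋯ + z_k (z_i ≥ 1) whose generator matrix G has as columns the i-th standard basis vector e_i of GF(2)^k repeated z_i times. Let H be the (n−k)×n block-diagonal binary matrix with blocks H_1,…,H_k, where H_i is the (z_i−1)×z_i matrix with (H_i)_{s,t} = 1 iff t ∈ {s, s+1}. Then H is a parity-check matrix of C (i.e., HG^T = 0 and rank(H) = n−k), and every nonzero x in the fundamental cone K(H) satisfies w_maxfrac(x) ≥ d(C) = min_i z_i. -/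
/- ---------- auxiliary lemmas ---------- -/

lemma sig_eq_iff {k : ℕ} {f : Fin k → ℕ} {c d : Σ i : Fin k, Fin (f i)} :
    c = d ↔ c.1 = d.1 ∧ c.2.1 = d.2.1 := by
  constructor
  · rintro rfl; exact ⟨rfl, rfl⟩
  · obtain ⟨i, t⟩ := c; obtain ⟨j, s⟩ := d
    rintro ⟨h1, h2⟩
    dsimp at h1 h2
    subst h1
    simp only [Sigma.mk.inj_iff, heq_eq_eq, true_and]
    exact Fin.ext h2

lemma ite_zmod_eq_one {P : Prop} [Decidable P] : (if P then (1 : ZMod 2) else 0) = 1 ↔ P := by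
  split_ifs with h <;> simp [h]

lemma card_filter_fst {k : ℕ} {z : Fin k → ℕ} (u : Fin k → ZMod 2) :
    (Finset.univ.filter (fun c : Σ i : Fin k, Fin (z i) => u c.1 ≠ 0)).card
      = ∑ i ∈ Finset.univ.filter (fun i => u i ≠ 0), z i := by
  rw [Finset.card_filter, ← Finset.univ_sigma_univ, Finset.sum_sigma]
  rw [Finset.sum_congr rfl (fun i _ => (by split_ifs with h <;> simp [h] :
      (∑ _t : Fin (z i), if u i ≠ 0 then (1:ℕ) else 0) = if u i ≠ 0 then z i else 0))]
  rw [← Finset.sum_filter]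

/-- The code whose generator matrix has as columns each standard basis vector e_i
    of GF(2)^k repeated z_i times, with the natural block-diagonal chain
    parity-check matrix H: H is a parity-check matrix (H Gᵀ = 0, rank n - k),
    the minimum distance is min_i z_i, and every nonzero pseudocodeword has
    max-fractional weight at least min_i z_i. -/
theorem repeated_basis_code_pseudoweight {k : ℕ} (hk : 0 < k)
    (z : Fin k → ℕ) (hz : ∀ i, 1 ≤ z i) :
    let G : Matrix (Fin k) (Σ i : Fin k, Fin (z i)) (ZMod 2) :=
      fun j c => if c.1 = j then 1 else 0
    let H : Matrix (Σ i : Fin k, Fin (z i - 1)) (Σ i : Fin k, Fin (z i)) (ZMod 2) :=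
      fun r c => if c.1 = r.1 ∧ (c.2.1 = r.2.1 ∨ c.2.1 = r.2.1 + 1) then 1 else 0
    let dmin : ℕ := Finset.univ.inf' ⟨⟨0, hk⟩, Finset.mem_univ _⟩ z
    (H * G.transpose = 0) ∧
    (H.rank = (∑ i, z i) - k) ∧
    (∀ u : Fin k → ZMod 2, u ≠ 0 → dmin ≤ hammingWt (Matrix.vecMul u G)) ∧
    (∃ u : Fin k → ZMod 2, u ≠ 0 ∧ hammingWt (Matrix.vecMul u G) = dmin) ∧
    (∀ x ∈ fundCone H, x ≠ 0 → (dmin : ℝ) ≤ wMaxfrac x) := by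
  intro G H dmin
  have hG : ∀ j c, G j c = if c.1 = j then 1 else 0 := fun _ _ => rfl
  have hH : ∀ r (c : Σ i : Fin k, Fin (z i)),
      H r c = if c.1 = r.1 ∧ (c.2.1 = r.2.1 ∨ c.2.1 = r.2.1 + 1) then 1 else 0 := fun _ _ => rfl
  have hdmin_le : ∀ i, dmin ≤ z i := fun i => Finset.inf'_le z (Finset.mem_univ i)
  have hval : ∀ (u : Fin k → ZMod 2) (c : Σ i : Fin k, Fin (z i)),
      Matrix.vecMul u G c = u c.1 := by
    intro u c
    show ∑ j, u j * G j c = u c.1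
    simp [hG, mul_ite, mul_one, mul_zero]
  refine ⟨?_, ?_, ?_, ?_, ?_⟩
  · -- H * Gᵀ = 0
    ext r j
    have h1 : r.2.1 < z r.1 := by have := r.2.2; omega
    have h2 : r.2.1 + 1 < z r.1 := by have := r.2.2; omega
    show ∑ c, H r c * G j c = 0
    have key : ∀ c, H r c * G j c =
        if (c.1 = r.1 ∧ (c.2.1 = r.2.1 ∨ c.2.1 = r.2.1 + 1)) ∧ c.1 = j then 1 else 0 := by
      intro c
      rw [hH, hG]
      by_cases hP : c.1 = r.1 ∧ (c.2.1 = r.2.1 ∨ c.2.1 = r.2.1 + 1)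
      · by_cases hQ : c.1 = j <;> simp [hP, hQ]
      · simp [hP]
    rw [Finset.sum_congr rfl (fun c _ => key c), Finset.sum_boole]
    by_cases hj : r.1 = j
    · have hfil : Finset.univ.filter
          (fun c : Σ i : Fin k, Fin (z i) =>
            (c.1 = r.1 ∧ (c.2.1 = r.2.1 ∨ c.2.1 = r.2.1 + 1)) ∧ c.1 = j)
          = {⟨r.1, ⟨r.2.1, h1⟩⟩, ⟨r.1, ⟨r.2.1 + 1, h2⟩⟩} := by
        ext c
        simp only [Finset.mem_filter, Finset.mem_univ, true_and, Finset.mem_insert,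
          Finset.mem_singleton, sig_eq_iff]
        constructor
        · rintro ⟨⟨hc1, hc2⟩, -⟩
          rcases hc2 with h | h
          · exact Or.inl ⟨hc1, h⟩
          · exact Or.inr ⟨hc1, h⟩
        · rintro (⟨hc1, hc2⟩ | ⟨hc1, hc2⟩) <;>
            exact ⟨⟨hc1, by omega⟩, hc1.trans hj⟩
      rw [hfil]
      rw [Finset.card_insert_of_notMem (by simp [sig_eq_iff]), Finset.card_singleton]
      decide
    · have hfil : Finset.univ.filter
          (fun c : Σ i : Fin k, Fin (z i) =>
            (c.1 = r.1 ∧ (c.2.1 = r.2.1 ∨ c.2.1 = r.2.1 + 1)) ∧ c.1 = j) = ∅ := by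
        ext c
        simp only [Finset.mem_filter, Finset.mem_univ, true_and, Finset.notMem_empty, iff_false]
        rintro ⟨⟨hc1, -⟩, hc2⟩
        exact hj (hc1.symm.trans hc2)
      rw [hfil]
      simp
  · -- rank
    have hker : ∀ v : (Σ i : Fin k, Fin (z i - 1)) → ZMod 2,
        H.transpose.mulVec v = 0 → v = 0 := by
      intro v hv
      have hblock : ∀ (i : Fin k) (m : ℕ) (hm : m < z i - 1), v ⟨i, ⟨m, hm⟩⟩ = 0 := by
        intro i m
        induction m using Nat.strong_induction_on with
        | _ m IH =>
          intro hm
          have hc : m < z i := by omega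
          have h0 : ∑ r, H r ⟨i, ⟨m, hc⟩⟩ * v r = 0 := congrFun hv ⟨i, ⟨m, hc⟩⟩
          have key : ∀ r, H r ⟨i, ⟨m, hc⟩⟩ * v r =
              if i = r.1 ∧ (m = r.2.1 ∨ m = r.2.1 + 1) then v r else 0 := by
            intro r
            rw [hH]
            split_ifs <;> simp_all
          rw [Finset.sum_congr rfl (fun r _ => key r), ← Finset.sum_filter] at h0
          rcases Nat.eq_zero_or_pos m with hm0 | hmpos
          · subst hm0
            have hfil : Finset.univ.filter
                (fun r : Σ i' : Fin k, Fin (z i' - 1) => i = r.1 ∧ (0 = r.2.1 ∨ 0 = r.2.1 + 1))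
                = {⟨i, ⟨0, hm⟩⟩} := by
              ext r
              simp only [Finset.mem_filter, Finset.mem_univ, true_and, Finset.mem_singleton,
                sig_eq_iff]
              constructor
              · rintro ⟨h1, h2⟩; exact ⟨h1.symm, by omega⟩
              · rintro ⟨h1, h2⟩; exact ⟨h1.symm, by omega⟩
            rw [hfil, Finset.sum_singleton] at h0
            exact h0
          · have hm1 : m - 1 < z i - 1 := by omega
            have hfil : Finset.univ.filter
                (fun r : Σ i' : Fin k, Fin (z i' - 1) => i = r.1 ∧ (m = r.2.1 ∨ m = r.2.1 + 1))
                = {⟨i, ⟨m, hm⟩⟩, ⟨i, ⟨m - 1, hm1⟩⟩} := by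
              ext r
              simp only [Finset.mem_filter, Finset.mem_univ, true_and, Finset.mem_insert,
                Finset.mem_singleton, sig_eq_iff]
              constructor
              · rintro ⟨h1, h2 | h2⟩
                · exact Or.inl ⟨h1.symm, h2.symm⟩
                · exact Or.inr ⟨h1.symm, by omega⟩
              · rintro (⟨h1, h2⟩ | ⟨h1, h2⟩)
                · exact ⟨h1.symm, Or.inl h2.symm⟩
                · exact ⟨h1.symm, Or.inr (by omega)⟩
            rw [hfil, Finset.sum_pair (by simp [sig_eq_iff]; omega)] at h0
            rw [IH (m - 1) (by omega) hm1, add_zero] at h0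
            exact h0
      funext r
      obtain ⟨i, s⟩ := r
      have := hblock i s.1 s.2
      simpa using this
    have hinj : Function.Injective H.transpose.mulVecLin := by
      rw [← LinearMap.ker_eq_bot, eq_bot_iff]
      intro v hv
      have h0 := LinearMap.mem_ker.mp hv
      rw [Matrix.mulVecLin_apply] at h0
      exact (Submodule.mem_bot _).mpr (hker v h0)
    have hr : H.rank = Fintype.card (Σ i : Fin k, Fin (z i - 1)) := by
      rw [← Matrix.rank_transpose, Matrix.rank, LinearMap.finrank_range_of_inj hinj,
        Module.finrank_fintype_fun_eq_card]
    rw [hr, Fintype.card_sigma]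
    simp only [Fintype.card_fin]
    have hsum : ∑ i, z i = (∑ i, (z i - 1)) + k := by
      calc ∑ i, z i = ∑ i, ((z i - 1) + 1) :=
            Finset.sum_congr rfl (fun i _ => by have := hz i; omega)
        _ = (∑ i, (z i - 1)) + ∑ _i : Fin k, 1 := Finset.sum_add_distrib
        _ = (∑ i, (z i - 1)) + k := by simp
    omega
  · -- dmin ≤ hamming weight
    intro u hu
    obtain ⟨i0, hi0⟩ := Function.ne_iff.mp hu
    have hwt : hammingWt (Matrix.vecMul u G) = ∑ i ∈ Finset.univ.filter (fun i => u i ≠ 0), z i := by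
      rw [hammingWt, Finset.filter_congr (fun c _ => by rw [hval]), card_filter_fst]
    rw [hwt]
    calc dmin ≤ z i0 := hdmin_le i0
      _ ≤ _ := Finset.single_le_sum (fun i _ => Nat.zero_le _)
          (Finset.mem_filter.mpr ⟨Finset.mem_univ _, by simpa using hi0⟩)
  · -- existence of minimal weight codeword
    obtain ⟨i0, -, hi0⟩ := Finset.exists_mem_eq_inf' (⟨⟨0, hk⟩, Finset.mem_univ _⟩ :
      (Finset.univ : Finset (Fin k)).Nonempty) z
    refine ⟨fun j => if j = i0 then 1 else 0, ?_, ?_⟩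
    · intro h
      have := congrFun h i0
      simp at this
    · have hwt : hammingWt (Matrix.vecMul (fun j => if j = i0 then (1:ZMod 2) else 0) G)
          = ∑ i ∈ Finset.univ.filter (fun i => (if i = i0 then (1:ZMod 2) else 0) ≠ 0), z i := by
        rw [hammingWt, Finset.filter_congr (fun c _ => by rw [hval])]
        exact card_filter_fst (fun j => if j = i0 then (1:ZMod 2) else 0)
      rw [hwt]
      have : Finset.univ.filter (fun i => (if i = i0 then (1:ZMod 2) else 0) ≠ 0) = {i0} := by
        ext i
        simp only [Finset.mem_filter, Finset.mem_univ, true_and, Finset.mem_singleton]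
        split_ifs with h <;> simp [h]
      rw [this, Finset.sum_singleton]
      exact hi0.symm
  · -- pseudoweight bound
    intro x hx hx0
    obtain ⟨hpos, hineq⟩ := hx
    have hz0 : ∀ i : Fin k, 0 < z i := fun i => hz i
    -- block constancy
    have step : ∀ (i : Fin k) (m : ℕ) (hm : m < z i - 1),
        x ⟨i, ⟨m, by omega⟩⟩ = x ⟨i, ⟨m + 1, by omega⟩⟩ := by
      intro i m hm
      set r : Σ i' : Fin k, Fin (z i' - 1) := ⟨i, ⟨m, hm⟩⟩ with hr
      have ha : m < z i := by omega
      have hb : m + 1 < z i := by omega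
      set a : Σ i' : Fin k, Fin (z i') := ⟨i, ⟨m, ha⟩⟩ with hadef
      set b : Σ i' : Fin k, Fin (z i') := ⟨i, ⟨m + 1, hb⟩⟩ with hbdef
      have hab : a ≠ b := by simp [hadef, hbdef, sig_eq_iff]
      have hHa : H r a = 1 := by rw [hH]; exact if_pos ⟨rfl, Or.inl rfl⟩
      have hHb : H r b = 1 := by rw [hH]; exact if_pos ⟨rfl, Or.inr rfl⟩
      have hsupp : ∀ c : Σ i' : Fin k, Fin (z i'), H r c = 1 ↔ c = a ∨ c = b := by
        intro c
        rw [hH, ite_zmod_eq_one]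
        simp only [sig_eq_iff, hadef, hbdef, hr]
        constructor
        · rintro ⟨h1, h2 | h2⟩
          · exact Or.inl ⟨h1, h2⟩
          · exact Or.inr ⟨h1, h2⟩
        · rintro (⟨h1, h2⟩ | ⟨h1, h2⟩)
          · exact ⟨h1, Or.inl h2⟩
          · exact ⟨h1, Or.inr h2⟩
      have h1 := hineq r a hHa
      have h2 := hineq r b hHb
      have hfa : Finset.univ.filter (fun c => H r c = 1 ∧ c ≠ a) = {b} := by
        ext c
        simp only [Finset.mem_filter, Finset.mem_univ, true_and, Finset.mem_singleton, hsupp]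
        constructor
        · rintro ⟨h | h, hne⟩
          · exact absurd h hne
          · exact h
        · rintro rfl; exact ⟨Or.inr rfl, hab.symm⟩
      have hfb : Finset.univ.filter (fun c => H r c = 1 ∧ c ≠ b) = {a} := by
        ext c
        simp only [Finset.mem_filter, Finset.mem_univ, true_and, Finset.mem_singleton, hsupp]
        constructor
        · rintro ⟨h | h, hne⟩
          · exact h
          · exact absurd h hne
        · rintro rfl; exact ⟨Or.inl rfl, hab⟩
      rw [hfa, Finset.sum_singleton] at h1
      rw [hfb, Finset.sum_singleton] at h2
      exact le_antisymm h1 h2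
    have hconst : ∀ (i : Fin k) (m : ℕ) (hm : m < z i),
        x ⟨i, ⟨m, hm⟩⟩ = x ⟨i, ⟨0, hz0 i⟩⟩ := by
      intro i m
      induction m with
      | zero => intro hm; rfl
      | succ n IH =>
        intro hm
        have hn : n < z i - 1 := by omega
        rw [← step i n hn]
        exact IH (by omega)
    -- nonempty
    have hne : Nonempty (Σ i : Fin k, Fin (z i)) := ⟨⟨⟨0, hk⟩, ⟨0, hz0 _⟩⟩⟩
    obtain ⟨c0, hc0⟩ := exists_eq_ciSup_of_finite (f := x)
    set M : ℝ := ⨆ c, x c with hM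
    obtain ⟨cp, hcp⟩ := Function.ne_iff.mp hx0
    have hxcp : 0 < x cp := lt_of_le_of_ne (hpos cp) (by simpa [eq_comm] using hcp)
    have hMpos : 0 < M := lt_of_lt_of_le hxcp (le_ciSup (Finite.bddAbove_range x) cp)
    -- sum computation
    have hsum : ∑ c, x c = ∑ i, (z i : ℝ) * x ⟨i, ⟨0, hz0 i⟩⟩ := by
      rw [← Finset.univ_sigma_univ, Finset.sum_sigma]
      refine Finset.sum_congr rfl (fun i _ => ?_)
      rw [Finset.sum_congr rfl (fun t _ => hconst i t.1 t.2)]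
      simp [Finset.sum_const, mul_comm]
    have hkey : (dmin : ℝ) * M ≤ ∑ c, x c := by
      rw [hsum]
      have h1 : M = x ⟨c0.1, ⟨0, hz0 c0.1⟩⟩ := by
        rw [← hc0, ← hconst c0.1 c0.2.1 c0.2.2]
      rw [h1]
      calc (dmin : ℝ) * x ⟨c0.1, ⟨0, hz0 c0.1⟩⟩ ≤ (z c0.1 : ℝ) * x ⟨c0.1, ⟨0, hz0 c0.1⟩⟩ :=
            mul_le_mul_of_nonneg_right (by exact_mod_cast hdmin_le c0.1) (hpos _)
        _ ≤ ∑ i, (z i : ℝ) * x ⟨i, ⟨0, hz0 i⟩⟩ :=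
            Finset.single_le_sum (f := fun i : Fin k => (z i : ℝ) * x ⟨i, ⟨0, hz0 i⟩⟩)
              (fun i _ => mul_nonneg (by positivity) (hpos _)) (Finset.mem_univ c0.1)
    rw [wMaxfrac, le_div_iff₀ hMpos]
    exact hkey
end
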